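/- arXiv:2206.15112 — 4 statements merged into one kernel-verified Lean document; each statement's English description precedes it below -/
import Mathlib

section
/- For every integer n ≥ 1 and every real R > 0, the integral ∫_{B_{ℝ^{2n}}(0,R)} (1 − 2t₁²)/(1 + 2t₁²)² dt₁…dt_{2n} is strictly positive. -/
/-!
Slice the ball along the coordinate `t i`. Since `(1 - 2x²)/(1 + 2x²)²` is the derivative of
`x/(1 + 2x²)`, the integral over a chord `|x| < s` equals `2s/(1 + 2s²) ≥ 0`, which is positive
for the chords through the interior, where `s > 0`.
-/

open MeasureTheory Set Metric

theorem hasDerivAt_div_one_add_two_mul_sq (x : ℝ) :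
    HasDerivAt (fun x : ℝ => x / (1 + 2 * x ^ 2)) ((1 - 2 * x ^ 2) / (1 + 2 * x ^ 2) ^ 2) x := by
  have hden : HasDerivAt (fun x : ℝ => 1 + 2 * x ^ 2) (4 * x) x :=
    (((hasDerivAt_pow 2 x).const_mul 2).const_add 1).congr_deriv (by norm_num; ring)
  exact ((hasDerivAt_id' x).div hden (by positivity)).congr_deriv (by field_simp; ring)

theorem integral_Ioo_neg_self_one_sub_two_mul_sq_div (s : ℝ) (hs : 0 ≤ s) :
    ∫ x in Ioo (-s) s, (1 - 2 * x ^ 2) / (1 + 2 * x ^ 2) ^ 2 = 2 * s / (1 + 2 * s ^ 2) := by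
  rw [← integral_Ioc_eq_integral_Ioo, ← intervalIntegral.integral_of_le (by linarith),
    intervalIntegral.integral_eq_sub_of_hasDerivAt
      (fun x _ => hasDerivAt_div_one_add_two_mul_sq x)
      ((by fun_prop (disch := intro x; positivity) :
        Continuous fun x : ℝ => (1 - 2 * x ^ 2) / (1 + 2 * x ^ 2) ^ 2).intervalIntegrable _ _)]
  ring

noncomputable def insertCoordEquiv {k : ℕ} (i : Fin (k + 1)) :
    ℝ × (Fin k → ℝ) ≃ᵐ EuclideanSpace ℝ (Fin (k + 1)) :=
  (MeasurableEquiv.piFinSuccAbove (fun _ => ℝ) i).symm.trans (MeasurableEquiv.toLp 2 _)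

/-- For `∑ j, y j ^ 2 ≥ R ^ 2` the square root returns `0`, so the chord is empty,
as it should be. -/
noncomputable def halfChord {k : ℕ} (R : ℝ) (y : Fin k → ℝ) : ℝ :=
  √(R ^ 2 - ∑ j, y j ^ 2)

section Slicing

variable {k : ℕ} (i : Fin (k + 1))

theorem measurePreserving_insertCoordEquiv : MeasurePreserving (insertCoordEquiv i) :=
  (EuclideanSpace.volume_preserving_symm_measurableEquiv_toLp _).symm.comp
    (volume_preserving_piFinSuccAbove (fun _ => ℝ) i).symm

@[simp]
theorem insertCoordEquiv_apply (x : ℝ) (y : Fin k → ℝ) :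
    insertCoordEquiv i (x, y) = WithLp.toLp 2 (Fin.insertNth i x y) := rfl

theorem insertCoordEquiv_apply_self (x : ℝ) (y : Fin k → ℝ) :
    insertCoordEquiv i (x, y) i = x := by
  simp

theorem norm_insertCoordEquiv_sq (x : ℝ) (y : Fin k → ℝ) :
    ‖insertCoordEquiv i (x, y)‖ ^ 2 = x ^ 2 + ∑ j, y j ^ 2 := by
  simp [EuclideanSpace.norm_sq_eq, Fin.sum_univ_succAbove _ i]

theorem insertCoordEquiv_mem_ball_iff {R : ℝ} (hR : 0 ≤ R) (x : ℝ) (y : Fin k → ℝ) :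
    insertCoordEquiv i (x, y) ∈ ball 0 R ↔ x ∈ Ioo (-halfChord R y) (halfChord R y) := by
  rw [mem_ball_zero_iff, mem_Ioo, ← abs_lt, halfChord, Real.lt_sqrt (abs_nonneg x), sq_abs,
    ← pow_lt_pow_iff_left₀ (norm_nonneg _) hR two_ne_zero, norm_insertCoordEquiv_sq,
    lt_sub_iff_add_lt]

variable {R : ℝ} {g : ℝ → ℝ}

theorem indicator_ball_comp_insertCoordEquiv (hR : 0 ≤ R) :
    (ball (0 : EuclideanSpace ℝ (Fin (k + 1))) R).indicator (fun t => g (t i)) ∘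
        insertCoordEquiv i =
      fun z => (Ioo (-halfChord R z.2) (halfChord R z.2)).indicator g z.1 := by
  ext ⟨x, y⟩
  by_cases hxy : insertCoordEquiv i (x, y) ∈ ball 0 R
  · have hx := (insertCoordEquiv_mem_ball_iff i hR x y).1 hxy
    rw [Function.comp_apply, indicator_of_mem hxy, indicator_of_mem hx, insertCoordEquiv_apply_self]
  · have hx := (insertCoordEquiv_mem_ball_iff i hR x y).not.1 hxy
    rw [Function.comp_apply, indicator_of_notMem hxy, indicator_of_notMem hx]

theorem integrable_indicator_halfChord (hR : 0 ≤ R)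
    (hg : IntegrableOn (fun t => g (t i)) (ball (0 : EuclideanSpace ℝ (Fin (k + 1))) R)) :
    Integrable fun z : ℝ × (Fin k → ℝ) =>
      (Ioo (-halfChord R z.2) (halfChord R z.2)).indicator g z.1 := by
  rw [← indicator_ball_comp_insertCoordEquiv i hR]
  exact ((measurePreserving_insertCoordEquiv i).integrable_comp_emb
    (insertCoordEquiv i).measurableEmbedding).2 ((integrable_indicator_iff measurableSet_ball).2 hg)

theorem integrable_integral_Ioo_halfChord (hR : 0 ≤ R)
    (hg : IntegrableOn (fun t => g (t i)) (ball (0 : EuclideanSpace ℝ (Fin (k + 1))) R)) :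
    Integrable fun y : Fin k → ℝ => ∫ x in Ioo (-halfChord R y) (halfChord R y), g x := by
  simpa [integral_indicator measurableSet_Ioo] using
    (integrable_indicator_halfChord i hR hg).integral_prod_right

theorem setIntegral_ball_eq_integral_halfChord (hR : 0 ≤ R)
    (hg : IntegrableOn (fun t => g (t i)) (ball (0 : EuclideanSpace ℝ (Fin (k + 1))) R)) :
    ∫ t in ball (0 : EuclideanSpace ℝ (Fin (k + 1))) R, g (t i) =
      ∫ y : Fin k → ℝ, ∫ x in Ioo (-halfChord R y) (halfChord R y), g x := by
  rw [← integral_indicator measurableSet_ball,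
    ← (measurePreserving_insertCoordEquiv i).integral_comp', ← Function.comp_def,
    indicator_ball_comp_insertCoordEquiv i hR, Measure.volume_eq_prod,
    integral_prod_symm _ (integrable_indicator_halfChord i hR hg)]
  simp only [integral_indicator measurableSet_Ioo]

end Slicing

theorem halfChord_nonneg {k : ℕ} (R : ℝ) (y : Fin k → ℝ) : 0 ≤ halfChord R y :=
  Real.sqrt_nonneg _

theorem continuous_halfChord {k : ℕ} (R : ℝ) : Continuous (halfChord (k := k) R) := by
  unfold halfChord
  fun_prop

theorem setIntegral_ball_one_sub_two_mul_sq_div_pos {m : ℕ} (i : Fin m) {R : ℝ} (hR : 0 < R) :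
    0 < ∫ t in ball (0 : EuclideanSpace ℝ (Fin m)) R,
      (1 - 2 * t i ^ 2) / (1 + 2 * t i ^ 2) ^ 2 := by
  cases m with
  | zero => exact i.elim0
  | succ k =>
    set f : ℝ → ℝ := fun x => (1 - 2 * x ^ 2) / (1 + 2 * x ^ 2) ^ 2
    change 0 < ∫ t in ball (0 : EuclideanSpace ℝ (Fin (k + 1))) R, f (t i)
    have hcont : Continuous f := by fun_prop (disch := intro x; positivity)
    have hint : IntegrableOn (fun t : EuclideanSpace ℝ (Fin (k + 1)) => f (t i)) (ball 0 R) :=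
      ((hcont.comp (EuclideanSpace.proj i).continuous).continuousOn.integrableOn_compact
        (isCompact_closedBall 0 R)).mono_set ball_subset_closedBall
    have hslice_integrable := integrable_integral_Ioo_halfChord i hR.le hint
    rw [setIntegral_ball_eq_integral_halfChord i hR.le hint]
    have hslice_integral :
        (fun y : Fin k → ℝ => ∫ x in Ioo (-halfChord R y) (halfChord R y), f x) =
        fun y => 2 * halfChord R y / (1 + 2 * halfChord R y ^ 2) :=
      funext fun y => integral_Ioo_neg_self_one_sub_two_mul_sq_div _ (halfChord_nonneg R y)
    rw [hslice_integral] at hslice_integrable ⊢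
    refine integral_pos_of_integrable_nonneg_nonzero (x := 0) ?_ hslice_integrable ?_ ?_
    · have := continuous_halfChord (k := k) R
      fun_prop (disch := intro x; positivity)
    · intro y
      have := halfChord_nonneg R y
      positivity
    · have : halfChord R (0 : Fin k → ℝ) = R := by simp [halfChord, hR.le]
      rw [this]
      positivity

theorem stmt1 (n : ℕ) (hn : 1 ≤ n) (R : ℝ) (hR : 0 < R) :
    0 < ∫ t in Metric.ball (0 : EuclideanSpace ℝ (Fin (2 * n))) R,
        (1 - 2 * (t ⟨0, by omega⟩) ^ 2) / (1 + 2 * (t ⟨0, by omega⟩) ^ 2) ^ 2 :=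
  setIntegral_ball_one_sub_two_mul_sq_div_pos _ hR
end

section
/- For every integer n ≥ 1 and every real R ≥ 0, ∫_{0}^{R} ∫_{0}^{π} (1 − r² cos²θ)/(1 + r² cos²θ)² · r^{2n−1} sin^{2n−2}θ dθ dr = (2 R^{2n} / (2n−1)) · ∫_{0}^{1} (1 − R² t²) (1 − t²)^{(2n−1)/2} / (1 + R² t²)² dt. -/
/-!
With `g x = (1 - x²) / (1 + x²)²`, the polar substitution `x = r cos θ`, `y = r sin θ` turns
`r ^ (2n-1) sin θ ^ (2n-2) dθ dr` into `y ^ (2n-2) dx dy`, so the left side is the integral of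
`g x * y ^ (2n-2)` over the upper half-disc of radius `R`. Integrating in `y` first gives
`g x * (R² - x²) ^ ((2n-1)/2) / (2n-1)`; since `g` is even, the substitution `x = R t` yields the
right side.
-/

open MeasureTheory Set Real

def upperHalfDisc (R : ℝ) : Set (ℝ × ℝ) := {p | p.1 ^ 2 + p.2 ^ 2 < R ^ 2 ∧ 0 < p.2}

lemma isOpen_upperHalfDisc (R : ℝ) : IsOpen (upperHalfDisc R) :=
  (isOpen_lt (f := fun p : ℝ × ℝ => p.1 ^ 2 + p.2 ^ 2) (by fun_prop) continuous_const).inter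
    (isOpen_lt continuous_const continuous_snd)

lemma upperHalfDisc_subset_Icc_prod_Icc {R : ℝ} (hR : 0 ≤ R) :
    upperHalfDisc R ⊆ Icc (-R) R ×ˢ Icc 0 R := by
  rintro ⟨x, y⟩ ⟨hxy, hy⟩
  have hx : x ^ 2 ≤ R ^ 2 := by nlinarith
  have hy' : y ^ 2 ≤ R ^ 2 := by nlinarith
  exact ⟨abs_le_of_sq_le_sq' hx hR, hy.le, (abs_le_of_sq_le_sq' hy' hR).2⟩

-- For `R ^ 2 ≤ x ^ 2` both sides fail, since `Real.sqrt` vanishes on nonpositive numbers.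
lemma mk_mem_upperHalfDisc_iff (R x y : ℝ) :
    (x, y) ∈ upperHalfDisc R ↔ y ∈ Ioo 0 √(R ^ 2 - x ^ 2) := by
  constructor
  · rintro ⟨hxy, hy⟩
    exact ⟨hy, lt_sqrt_of_sq_lt (by linarith)⟩
  · rintro ⟨hy, hys⟩
    exact ⟨by linarith [(lt_sqrt hy.le).1 hys], hy⟩

lemma polarCoord_symm_mem_upperHalfDisc_iff {R : ℝ} (hR : 0 ≤ R) {p : ℝ × ℝ}
    (hp : p ∈ polarCoord.target) :
    polarCoord.symm p ∈ upperHalfDisc R ↔ p ∈ Ioo 0 R ×ˢ Ioo 0 π := by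
  obtain ⟨r, θ⟩ := p
  obtain ⟨hr, hθ⟩ := hp
  simp only [mem_Ioi] at hr
  simp only [mem_Ioo] at hθ
  have hnorm : (r * cos θ) ^ 2 + (r * sin θ) ^ 2 = r ^ 2 := by
    rw [mul_pow, mul_pow, ← mul_add, cos_sq_add_sin_sq, mul_one]
  have hsin : 0 < sin θ ↔ 0 < θ :=
    ⟨fun h => not_le.1 fun h' => h.not_ge (sin_nonpos_of_nonpos_of_neg_pi_le h' hθ.1.le),
      fun h => sin_pos_of_pos_of_lt_pi h hθ.2⟩
  simp only [upperHalfDisc, polarCoord_symm_apply, mem_ofPred_eq, hnorm, mem_prod, mem_Ioo,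
    mul_pos_iff_of_pos_left hr, hsin, pow_lt_pow_iff_left₀ hr.le hR two_ne_zero]
  tauto

lemma integral_upperHalfDisc_eq_integral_polar {φ : ℝ × ℝ → ℝ} (hφ : Continuous φ) {R : ℝ}
    (hR : 0 ≤ R) :
    ∫ p in upperHalfDisc R, φ p =
      ∫ r in 0..R, ∫ θ in 0..π, r * φ (r * cos θ, r * sin θ) := by
  set F : ℝ × ℝ → ℝ := fun p => p.1 * φ (polarCoord.symm p)
  have hF : Continuous F := by simp only [F, polarCoord_symm_apply]; fun_prop
  have hpolar : ∀ p ∈ polarCoord.target,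
      p.1 • (upperHalfDisc R).indicator φ (polarCoord.symm p) =
        (Ioo 0 R ×ˢ Ioo 0 π).indicator F p := by
    intro p hp
    simp only [indicator, polarCoord_symm_mem_upperHalfDisc_iff hR hp, smul_eq_mul, F]
    split_ifs <;> simp
  have hsub : Ioo 0 R ×ˢ Ioo 0 π ⊆ polarCoord.target :=
    prod_mono Ioo_subset_Ioi_self (Ioo_subset_Ioo_left (by linarith [pi_pos]))
  have hint : IntegrableOn F (Ioo 0 R ×ˢ Ioo 0 π) :=
    (hF.continuousOn.integrableOn_compact (isCompact_Icc.prod isCompact_Icc)).mono_set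
      (prod_mono Ioo_subset_Icc_self Ioo_subset_Icc_self)
  rw [← integral_indicator (isOpen_upperHalfDisc R).measurableSet,
    ← integral_comp_polarCoord_symm,
    setIntegral_congr_fun polarCoord.open_target.measurableSet hpolar,
    integral_indicator (measurableSet_Ioo.prod measurableSet_Ioo),
    Measure.restrict_restrict (measurableSet_Ioo.prod measurableSet_Ioo),
    inter_eq_self_of_subset_left hsub, Measure.volume_eq_prod, setIntegral_prod F hint,
    intervalIntegral.integral_of_le hR, integral_Ioc_eq_integral_Ioo]
  refine setIntegral_congr_fun measurableSet_Ioo fun r _ => ?_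
  rw [intervalIntegral.integral_of_le pi_pos.le, integral_Ioc_eq_integral_Ioo]
  rfl

lemma integral_upperHalfDisc_eq_integral_vertical {φ : ℝ × ℝ → ℝ} (hφ : Continuous φ) {R : ℝ}
    (hR : 0 ≤ R) :
    ∫ p in upperHalfDisc R, φ p = ∫ x in -R..R, ∫ y in 0..√(R ^ 2 - x ^ 2), φ (x, y) := by
  have hmeas := (isOpen_upperHalfDisc R).measurableSet
  have hint : Integrable ((upperHalfDisc R).indicator φ) (volume.prod volume) :=
    (integrable_indicator_iff hmeas).2 <|
      (hφ.continuousOn.integrableOn_compact (isCompact_Icc.prod isCompact_Icc)).mono_set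
        (upperHalfDisc_subset_Icc_prod_Icc hR)
  have hslice (x : ℝ) :
      ∫ y, (upperHalfDisc R).indicator φ (x, y) = ∫ y in 0..√(R ^ 2 - x ^ 2), φ (x, y) := by
    have : (fun y => (upperHalfDisc R).indicator φ (x, y)) =
        (Ioo 0 √(R ^ 2 - x ^ 2)).indicator fun y => φ (x, y) := by
      ext y; simp only [indicator, mk_mem_upperHalfDisc_iff]
    rw [this, integral_indicator measurableSet_Ioo,
      intervalIntegral.integral_of_le (sqrt_nonneg _), integral_Ioc_eq_integral_Ioo]
  have houtside : ∀ x ∉ Ioc (-R) R, ∫ y in 0..√(R ^ 2 - x ^ 2), φ (x, y) = 0 := by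
    intro x hx
    have : R ^ 2 - x ^ 2 ≤ 0 := by
      simp only [mem_Ioc, not_and_or, not_lt, not_le] at hx
      rcases hx with hx | hx <;> nlinarith
    rw [sqrt_eq_zero'.2 this, intervalIntegral.integral_same]
  rw [← integral_indicator hmeas, Measure.volume_eq_prod, integral_prod _ hint,
    intervalIntegral.integral_of_le (by linarith),
    setIntegral_eq_integral_of_forall_compl_eq_zero houtside]
  simp_rw [hslice]

lemma integral_neg_to_eq_two_mul_of_even {f : ℝ → ℝ} (hf : Function.Even f)
    (hfc : Continuous f) (R : ℝ) :
    ∫ x in -R..R, f x = 2 * ∫ x in 0..R, f x := by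
  have hleft : ∫ x in -R..0, f x = ∫ x in 0..R, f x := by
    simpa only [hf _, neg_zero] using (intervalIntegral.integral_comp_neg (a := 0) (b := R) f).symm
  rw [← intervalIntegral.integral_add_adjacent_intervals (b := 0) (hfc.intervalIntegrable _ _)
    (hfc.intervalIntegrable _ _), hleft, two_mul]

lemma sqrt_sq_sub_sq_pow_eq_rpow {R t : ℝ} (hR : 0 ≤ R) (ht : t ^ 2 ≤ 1) (k : ℕ) :
    √(R ^ 2 - (R * t) ^ 2) ^ k = R ^ k * (1 - t ^ 2) ^ ((k : ℝ) / 2) := by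
  have h1 : 0 ≤ 1 - t ^ 2 := by linarith
  rw [show R ^ 2 - (R * t) ^ 2 = R ^ 2 * (1 - t ^ 2) by ring, sqrt_mul (sq_nonneg R), sqrt_sq hR,
    mul_pow, ← rpow_natCast √(1 - t ^ 2), sqrt_eq_rpow, ← rpow_mul h1, one_div_mul_eq_div]

theorem stmt4 (n : ℕ) (hn : 1 ≤ n) (R : ℝ) (hR : 0 ≤ R) :
    (∫ r in (0 : ℝ)..R, ∫ θ in (0 : ℝ)..Real.pi,
        (1 - r ^ 2 * Real.cos θ ^ 2) / (1 + r ^ 2 * Real.cos θ ^ 2) ^ 2 *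
          (r ^ (2 * n - 1) * Real.sin θ ^ (2 * n - 2))) =
      (2 * R ^ (2 * n) / (2 * (n : ℝ) - 1)) *
        ∫ t in (0 : ℝ)..1,
          (1 - R ^ 2 * t ^ 2) * (1 - t ^ 2) ^ ((2 * (n : ℝ) - 1) / 2) /
            (1 + R ^ 2 * t ^ 2) ^ 2 := by
  obtain ⟨m, rfl⟩ : ∃ m, n = m + 1 := ⟨n - 1, by omega⟩
  set g : ℝ → ℝ := fun u => (1 - u ^ 2) / (1 + u ^ 2) ^ 2
  have hg : Continuous g := by fun_prop (disch := intro; positivity)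
  have hφ : Continuous fun p : ℝ × ℝ => g p.1 * p.2 ^ (2 * m) := by fun_prop
  have hk : ((2 * m + 1 : ℕ) : ℝ) = 2 * ((m + 1 : ℕ) : ℝ) - 1 := by push_cast; ring
  calc _ = ∫ r in 0..R, ∫ θ in 0..π, r * (g (r * cos θ) * (r * sin θ) ^ (2 * m)) := by
        simp only [g, show 2 * (m + 1) - 1 = 2 * m + 1 by omega,
          show 2 * (m + 1) - 2 = 2 * m by omega]
        ring_nf
    _ = ∫ x in -R..R, ∫ y in 0..√(R ^ 2 - x ^ 2), g x * y ^ (2 * m) := by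
        rw [← integral_upperHalfDisc_eq_integral_polar hφ hR,
          integral_upperHalfDisc_eq_integral_vertical hφ hR]
    _ = ∫ x in -R..R, g x * √(R ^ 2 - x ^ 2) ^ (2 * m + 1) / (2 * m + 1) := by
        refine intervalIntegral.integral_congr fun x _ => ?_
        rw [intervalIntegral.integral_const_mul, integral_pow]
        push_cast
        ring
    _ = 2 * (R * ∫ t in 0..1,
          g (R * t) * √(R ^ 2 - (R * t) ^ 2) ^ (2 * m + 1) / (2 * m + 1)) := by
        rw [integral_neg_to_eq_two_mul_of_even (fun x => by simp only [g, neg_sq])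
          (by fun_prop), ← smul_eq_mul R, intervalIntegral.smul_integral_comp_mul_left
          (fun x => g x * √(R ^ 2 - x ^ 2) ^ (2 * m + 1) / (2 * m + 1)), mul_zero, mul_one]
    _ = _ := by
        rw [intervalIntegral.integral_congr (g := fun t => R ^ (2 * m + 1) / (2 * m + 1) *
          ((1 - R ^ 2 * t ^ 2) * (1 - t ^ 2) ^ ((2 * ((m + 1 : ℕ) : ℝ) - 1) / 2) /
            (1 + R ^ 2 * t ^ 2) ^ 2)), intervalIntegral.integral_const_mul]
        · push_cast
          ring
        intro t ht
        rw [uIcc_of_le zero_le_one] at ht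
        have ht2 : t ^ 2 ≤ 1 := by nlinarith [ht.1, ht.2]
        simp only [g, sqrt_sq_sub_sq_pow_eq_rpow hR ht2, hk]
        ring
end

section
/- Let m ≥ 1 be an integer and let f : ℝ^m → ℝ be a smooth (C^∞) function that vanishes transversally, i.e. for every x ∈ ℝ^m with f(x) = 0 the differential of f at x is nonzero. Then the function x ↦ log( f(x)² ) is locally integrable on ℝ^m with respect to Lebesgue measure; in particular it is integrable on every compact subset of ℝ^m. -/
open MeasureTheory Set
open scoped ENNReal NNReal Topology

lemma aux_log_Ioc (R : ℝ) (hR : 0 < R) : IntegrableOn Real.log (Set.Ioc 0 R) := by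
  have hrpow : IntegrableOn (fun x : ℝ => x ^ (-(1:ℝ)/2)) (Set.Ioc 0 R) := by
    have := intervalIntegral.intervalIntegrable_rpow' (a := 0) (b := R) (r := -(1:ℝ)/2) (by norm_num)
    rwa [intervalIntegrable_iff, Set.uIoc_of_le hR.le] at this
  have hg : IntegrableOn (fun x : ℝ => 2 * x ^ (-(1:ℝ)/2) + |Real.log R|) (Set.Ioc 0 R) := by
    exact (hrpow.const_mul 2).add (integrableOn_const (by simp))
  refine Integrable.mono hg Real.measurable_log.aestronglyMeasurable ?_
  filter_upwards [ae_restrict_mem measurableSet_Ioc] with x hx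
  obtain ⟨hx0, hxR⟩ := hx
  have h1 : Real.log x ≤ |Real.log R| := by
    calc Real.log x ≤ Real.log R := Real.log_le_log hx0 hxR
    _ ≤ |Real.log R| := le_abs_self _
  have h2 : -Real.log x ≤ 2 * x ^ (-(1:ℝ)/2) := by
    have hxp : (0:ℝ) < x ^ (-(1:ℝ)/2) := Real.rpow_pos_of_pos hx0 _
    have := Real.log_le_sub_one_of_pos hxp
    rw [Real.log_rpow hx0] at this
    nlinarith
  have hpos : (0:ℝ) ≤ 2 * x ^ (-(1:ℝ)/2) := by positivity
  rw [Real.norm_eq_abs, Real.norm_eq_abs]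
  have hA : 2 * x ^ (-(1:ℝ)/2) + |Real.log R| ≤ |(2 * x ^ (-(1:ℝ)/2) + |Real.log R|)| := le_abs_self _
  rw [abs_le]
  constructor
  · nlinarith [abs_nonneg (Real.log R)]
  · nlinarith [abs_nonneg (Real.log R)]

lemma aux_log_sq (R : ℝ) (hR : 0 < R) :
    IntegrableOn (fun s : ℝ => Real.log (s ^ 2)) (Set.Icc (-R) R) := by
  have h1 : IntegrableOn Real.log (Set.Icc 0 R) :=
    (aux_log_Ioc R hR).congr_set_ae (MeasureTheory.Ioc_ae_eq_Icc (μ := volume) (a := 0) (b := R)).symm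
  have hneg : IntegrableOn Real.log (Set.Icc (-R) 0) := by
    have hemb : MeasurableEmbedding (fun x : ℝ => -x) := (Homeomorph.neg ℝ).measurableEmbedding
    have hmp : MeasurePreserving (fun x : ℝ => -x) volume volume := Measure.measurePreserving_neg _
    have himg : (fun x : ℝ => -x) '' Set.Icc 0 R = Set.Icc (-R) 0 := by
      rw [show (fun x : ℝ => -x) = Neg.neg from rfl, Set.image_neg_Icc, neg_zero]
    have := (hmp.integrableOn_image hemb (f := Real.log) (s := Set.Icc 0 R)).2 ?_
    · rwa [himg] at this
    · refine h1.congr_fun (fun x _ => ?_) measurableSet_Icc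
      simp [Function.comp, Real.log_neg_eq_log]
  have : IntegrableOn Real.log (Set.Icc (-R) 0 ∪ Set.Icc 0 R) := hneg.union h1
  have hsub : Set.Icc (-R) R ⊆ Set.Icc (-R) 0 ∪ Set.Icc 0 R := by
    intro x hx
    rcases le_total x 0 with h | h
    · exact Or.inl ⟨hx.1, h⟩
    · exact Or.inr ⟨h, hx.2⟩
  have hint : IntegrableOn Real.log (Set.Icc (-R) R) := this.mono_set hsub
  refine IntegrableOn.congr_fun (hint.const_mul 2) (fun x _ => ?_) measurableSet_Icc
  rw [Real.log_pow]; push_cast; ring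

lemma slice_bound (g : ℝ → ℝ) (a b c M : ℝ) (hc : 0 < c) (hM : 0 < M) (hab : a ≤ b)
    (hderiv : ∀ t ∈ Set.Icc a b, ∃ d, HasDerivAt g d t ∧ c ≤ d)
    (hbound : ∀ t ∈ Set.Icc a b, |g t| ≤ M) :
    ∫⁻ t in Set.Icc a b, ‖Real.log (g t ^ 2)‖₊ ≤
      (∫⁻ s in Set.Icc (-((b - a) + 2 * M / c)) ((b - a) + 2 * M / c),
        ‖Real.log (c ^ 2 * s ^ 2)‖₊) + ‖Real.log (M ^ 2)‖₊ * volume (Set.Icc a b) := by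
  set R := (b - a) + 2 * M / c with hRdef
  have hMc : 0 < 2 * M / c := by positivity
  have hcont : ContinuousOn g (Set.Icc a b) := fun t ht =>
    ((hderiv t ht).choose_spec.1.differentiableAt.continuousAt).continuousWithinAt
  have hkey : ∀ s ∈ Set.Icc a b, ∀ t ∈ Set.Icc a b, s ≤ t → c * (t - s) ≤ g t - g s := by
    refine Convex.mul_sub_le_image_sub_of_le_deriv (convex_Icc a b) hcont ?_ ?_
    · intro t ht
      exact ((hderiv t (interior_subset ht)).choose_spec.1.differentiableAt).differentiableWithinAt
    · intro t ht
      obtain ⟨d, hd, hcd⟩ := hderiv t (interior_subset ht)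
      rw [hd.deriv]; exact hcd
  obtain ⟨t₀, ht₀mem, ht₀⟩ : ∃ t₀ ∈ Set.Icc (a - 2 * M / c) (b + 2 * M / c),
      ∀ t ∈ Set.Icc a b, c * |t - t₀| ≤ |g t| := by
    have hga : |g a| ≤ M := hbound a ⟨le_refl a, hab⟩
    have hgb : |g b| ≤ M := hbound b ⟨hab, le_refl b⟩
    have habs_a := abs_le.1 hga
    have habs_b := abs_le.1 hgb
    rcases le_or_gt 0 (g a) with hga0 | hga0
    · -- g ≥ 0 on whole interval, take t₀ = a - g a / c
      have hdiv : c * (g a / c) = g a := mul_div_cancel₀ _ (ne_of_gt hc)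
      have hdivnn : 0 ≤ g a / c := by positivity
      have hdivle : g a / c ≤ 2 * M / c := by gcongr; nlinarith
      refine ⟨a - g a / c, ⟨by linarith, by linarith⟩, ?_⟩
      intro t ht
      have h1 : c * (t - a) ≤ g t - g a := hkey a ⟨le_refl a, hab⟩ t ht ht.1
      have hgt0 : 0 ≤ g t := by nlinarith [ht.1]
      have htge : 0 ≤ t - (a - g a / c) := by nlinarith [ht.1]
      rw [abs_of_nonneg hgt0, abs_of_nonneg htge]
      nlinarith
    rcases le_or_gt (g b) 0 with hgb0 | hgb0
    · -- g ≤ 0 on whole interval, take t₀ = b - g b / c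
      have hdiv : c * (g b / c) = g b := mul_div_cancel₀ _ (ne_of_gt hc)
      have hdivnp : g b / c ≤ 0 := div_nonpos_of_nonpos_of_nonneg hgb0 hc.le
      have hdivle : -g b / c ≤ 2 * M / c := by gcongr; nlinarith
      rw [neg_div] at hdivle
      refine ⟨b - g b / c, ⟨by linarith, by linarith⟩, ?_⟩
      intro t ht
      have h1 : c * (b - t) ≤ g b - g t := hkey t ht b ⟨hab, le_refl b⟩ ht.2
      have hgt0 : g t ≤ 0 := by nlinarith [ht.2]
      have htle : t - (b - g b / c) ≤ 0 := by nlinarith [ht.2]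
      rw [abs_of_nonpos hgt0, abs_of_nonpos htle]
      nlinarith
    · -- g changes sign, IVT
      have h0mem : (0:ℝ) ∈ Set.Icc (g a) (g b) := ⟨hga0.le, hgb0.le⟩
      obtain ⟨t₀, ht₀ab, hgt₀⟩ := intermediate_value_Icc hab hcont h0mem
      refine ⟨t₀, ⟨by nlinarith [ht₀ab.1], by nlinarith [ht₀ab.2]⟩, ?_⟩
      intro t ht
      rcases le_total t₀ t with hle | hle
      · have h1 : c * (t - t₀) ≤ g t - g t₀ := hkey t₀ ht₀ab t ht hle
        rw [hgt₀] at h1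
        have hgt0 : 0 ≤ g t := by nlinarith
        rw [abs_of_nonneg hgt0, abs_of_nonneg (by linarith : (0:ℝ) ≤ t - t₀)]
        linarith
      · have h1 : c * (t₀ - t) ≤ g t₀ - g t := hkey t ht t₀ ht₀ab hle
        rw [hgt₀] at h1
        have hgt0 : g t ≤ 0 := by nlinarith
        rw [abs_of_nonpos hgt0, abs_of_nonpos (by linarith : t - t₀ ≤ 0)]
        linarith
  -- a.e. pointwise bound
  have hne : ∀ᵐ (t : ℝ) ∂(volume.restrict (Set.Icc a b)), t ≠ t₀ := by
    refine ae_restrict_of_ae ?_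
    rw [ae_iff]
    have hset : {t : ℝ | ¬t ≠ t₀} = {t₀} := by ext t; simp
    rw [hset]
    exact measure_singleton t₀
  calc ∫⁻ t in Set.Icc a b, ‖Real.log (g t ^ 2)‖₊
      ≤ ∫⁻ t in Set.Icc a b,
          (‖Real.log (c ^ 2 * (t - t₀) ^ 2)‖₊ + (‖Real.log (M ^ 2)‖₊ : ℝ≥0∞)) := by
        refine lintegral_mono_ae ?_
        filter_upwards [ae_restrict_mem measurableSet_Icc, hne] with t ht htne
        have hsub : t - t₀ ≠ 0 := sub_ne_zero.2 htne
        have hlo : 0 < c ^ 2 * (t - t₀) ^ 2 := by positivity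
        have hc1 := ht₀ t ht
        have hb1 := hbound t ht
        have h1 : c ^ 2 * (t - t₀) ^ 2 ≤ g t ^ 2 := by
          nlinarith [sq_abs (g t), sq_abs (t - t₀), abs_nonneg (g t), abs_nonneg (t - t₀),
            mul_le_mul hc1 hc1 (by positivity) (abs_nonneg (g t))]
        have h2 : g t ^ 2 ≤ M ^ 2 := by
          nlinarith [sq_abs (g t), abs_nonneg (g t), mul_le_mul hb1 hb1 (abs_nonneg (g t)) hM.le]
        have hgpos : 0 < g t ^ 2 := lt_of_lt_of_le hlo h1
        have hl1 : Real.log (c ^ 2 * (t - t₀) ^ 2) ≤ Real.log (g t ^ 2) :=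
          Real.log_le_log hlo h1
        have hl2 : Real.log (g t ^ 2) ≤ Real.log (M ^ 2) := Real.log_le_log hgpos h2
        have habs : |Real.log (g t ^ 2)| ≤
            |Real.log (c ^ 2 * (t - t₀) ^ 2)| + |Real.log (M ^ 2)| := by
          rw [abs_le]
          constructor
          · have := neg_abs_le (Real.log (c ^ 2 * (t - t₀) ^ 2))
            have := abs_nonneg (Real.log (M ^ 2))
            linarith
          · have := le_abs_self (Real.log (M ^ 2))
            have := abs_nonneg (Real.log (c ^ 2 * (t - t₀) ^ 2))
            linarith
        calc (‖Real.log (g t ^ 2)‖₊ : ℝ≥0∞) = ENNReal.ofReal |Real.log (g t ^ 2)| :=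
              Real.enorm_eq_ofReal_abs _
          _ ≤ ENNReal.ofReal (|Real.log (c ^ 2 * (t - t₀) ^ 2)| + |Real.log (M ^ 2)|) :=
              ENNReal.ofReal_le_ofReal habs
          _ = ENNReal.ofReal |Real.log (c ^ 2 * (t - t₀) ^ 2)| +
              ENNReal.ofReal |Real.log (M ^ 2)| :=
              ENNReal.ofReal_add (abs_nonneg _) (abs_nonneg _)
          _ = ‖Real.log (c ^ 2 * (t - t₀) ^ 2)‖₊ + (‖Real.log (M ^ 2)‖₊ : ℝ≥0∞) := by
              rw [← Real.enorm_eq_ofReal_abs, ← Real.enorm_eq_ofReal_abs]; rfl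
    _ = (∫⁻ t in Set.Icc a b, ‖Real.log (c ^ 2 * (t - t₀) ^ 2)‖₊)
          + ‖Real.log (M ^ 2)‖₊ * volume (Set.Icc a b) := by
        rw [lintegral_add_right _ measurable_const, setLIntegral_const]
    _ ≤ (∫⁻ t in Set.Icc (-R + t₀) (R + t₀), ‖Real.log (c ^ 2 * (t - t₀) ^ 2)‖₊)
          + ‖Real.log (M ^ 2)‖₊ * volume (Set.Icc a b) := by
        gcongr ?_ + _
        refine lintegral_mono_set (fun t ht => ?_)
        obtain ⟨h1, h2⟩ := ht₀mem
        exact ⟨by simp only [hRdef]; linarith [ht.1], by simp only [hRdef]; linarith [ht.2]⟩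
    _ = (∫⁻ s in Set.Icc (-R) R, ‖Real.log (c ^ 2 * s ^ 2)‖₊)
          + ‖Real.log (M ^ 2)‖₊ * volume (Set.Icc a b) := by
        congr 1
        have hmp : MeasurePreserving (fun x : ℝ => x + t₀) volume volume :=
          measurePreserving_add_right volume t₀
        have hemb : MeasurableEmbedding (fun x : ℝ => x + t₀) :=
          (Homeomorph.addRight t₀).measurableEmbedding
        have := hmp.setLIntegral_comp_emb hemb
          (fun t => (‖Real.log (c ^ 2 * (t - t₀) ^ 2)‖₊ : ℝ≥0∞)) (Set.Icc (-R) R)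
        rw [Set.image_add_const_Icc] at this
        simp only [add_sub_cancel_right] at this
        exact this.symm

lemma aux_const_lt_top (k R : ℝ) (hk : k ≠ 0) (hR : 0 < R) :
    ∫⁻ s in Set.Icc (-R) R, ‖Real.log (k ^ 2 * s ^ 2)‖₊ < ⊤ := by
  have hvol : volume (Set.Icc (-R) R) < ⊤ := by
    rw [Real.volume_Icc]; exact ENNReal.ofReal_lt_top
  have h1 : IntegrableOn (fun s : ℝ => Real.log (s ^ 2) + Real.log (k ^ 2))
      (Set.Icc (-R) R) := (aux_log_sq R hR).add (integrableOn_const hvol.ne)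
  have hInt : IntegrableOn (fun s : ℝ => Real.log (k ^ 2 * s ^ 2)) (Set.Icc (-R) R) := by
    refine h1.congr_fun_ae ?_
    have hne : ∀ᵐ (s : ℝ) ∂(volume.restrict (Set.Icc (-R) R)), s ≠ 0 := by
      refine ae_restrict_of_ae ?_
      rw [ae_iff]
      have hset : {s : ℝ | ¬s ≠ 0} = {0} := by ext s; simp
      rw [hset]; exact measure_singleton 0
    filter_upwards [hne] with s hs
    rw [← Real.log_mul (pow_ne_zero 2 hs) (pow_ne_zero 2 hk), mul_comm]
  exact hInt.2

theorem stmt11 (m : ℕ) (hm : 1 ≤ m) (f : EuclideanSpace ℝ (Fin m) → ℝ)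
    (hf : ContDiff ℝ (⊤ : ℕ∞) f) (htrans : ∀ x, f x = 0 → fderiv ℝ f x ≠ 0) :
    LocallyIntegrable (fun x => Real.log ((f x) ^ 2)) volume ∧
      ∀ K : Set (EuclideanSpace ℝ (Fin m)), IsCompact K →
        IntegrableOn (fun x => Real.log ((f x) ^ 2)) K volume := by
  have hloc : LocallyIntegrable (fun x => Real.log ((f x) ^ 2)) volume := by
    obtain ⟨n, rfl⟩ : ∃ n : ℕ, m = n + 1 := ⟨m - 1, by omega⟩
    intro p
    by_cases hp : f p = 0
    · -- hard case: p is a zero of f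
      set L := fderiv ℝ f p with hLdef
      have hL0 : L ≠ 0 := htrans p hp
      obtain ⟨u, hu⟩ : ∃ u, L u ≠ 0 := by
        by_contra h
        push_neg at h
        exact hL0 (ContinuousLinearMap.ext fun u => by simp [h u])
      have hu0 : u ≠ 0 := fun h => hu (by simp [h])
      have hnu : (0:ℝ) < ‖u‖ := norm_pos_iff.2 hu0
      obtain ⟨v, hv1, hvpos⟩ : ∃ v : EuclideanSpace ℝ (Fin (n + 1)), ‖v‖ = 1 ∧ 0 < L v := by
        rcases lt_or_gt_of_ne hu with hneg | hpos
        · refine ⟨-(‖u‖⁻¹ • u), ?_, ?_⟩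
          · rw [norm_neg, norm_smul, norm_inv, norm_norm, inv_mul_cancel₀ (ne_of_gt hnu)]
          · rw [map_neg, L.map_smul]
            simp only [smul_eq_mul]
            have : 0 < ‖u‖⁻¹ := inv_pos.2 hnu
            nlinarith
        · refine ⟨‖u‖⁻¹ • u, ?_, ?_⟩
          · rw [norm_smul, norm_inv, norm_norm, inv_mul_cancel₀ (ne_of_gt hnu)]
          · rw [L.map_smul]
            simp only [smul_eq_mul]
            have : 0 < ‖u‖⁻¹ := inv_pos.2 hnu
            nlinarith
      set c := L v with hcdef
      -- a ball on which the directional derivative is at least c/2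
      have hfd : Continuous fun x => (fderiv ℝ f x) v :=
        (hf.continuous_fderiv (by simp)).clm_apply continuous_const
      have hsopen : IsOpen {x : EuclideanSpace ℝ (Fin (n + 1)) | c / 2 < (fderiv ℝ f x) v} :=
        isOpen_lt continuous_const hfd
      have hpmem : p ∈ {x : EuclideanSpace ℝ (Fin (n + 1)) | c / 2 < (fderiv ℝ f x) v} := by
        simp only [Set.mem_setOf_eq, ← hLdef, ← hcdef]
        linarith
      obtain ⟨δ, hδ, hδball⟩ := Metric.nhds_basis_closedBall.mem_iff.1 (hsopen.mem_nhds hpmem)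
      -- a bound for |f| on that ball
      obtain ⟨M₀, hM₀⟩ := (isCompact_closedBall p δ).exists_bound_of_continuousOn
        hf.continuous.continuousOn
      set M := max M₀ 1 with hMdef
      have hM : (0:ℝ) < M := lt_of_lt_of_le one_pos (le_max_right _ _)
      have hMb : ∀ x ∈ Metric.closedBall p δ, |f x| ≤ M := fun x hx =>
        le_trans (le_trans (le_of_eq (Real.norm_eq_abs _).symm) (hM₀ x hx)) (le_max_left _ _)
      -- orthonormal basis containing v
      set j : Fin (n + 1) := 0 with hjdef
      have hortho : Orthonormal ℝ (Set.restrict {j} fun _ : Fin (n + 1) => v) := by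
        rw [orthonormal_iff_ite]
        rintro ⟨i₁, hi₁⟩ ⟨i₂, hi₂⟩
        simp only [Set.mem_singleton_iff] at hi₁ hi₂
        subst hi₁; subst hi₂
        simp only [Set.restrict_apply]
        rw [if_pos trivial, real_inner_self_eq_norm_mul_norm]; show ‖v‖ * ‖v‖ = 1; rw [hv1]
        norm_num
      have hcard : Module.finrank ℝ (EuclideanSpace ℝ (Fin (n + 1))) = Fintype.card (Fin (n + 1)) := by
        simp [finrank_euclideanSpace]
      obtain ⟨b, hb⟩ := hortho.exists_orthonormalBasis_extension_of_card_eq hcard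
      have hbj : b j = v := hb j rfl
      -- the measurable equivalence
      set e1 := b.measurableEquiv.symm with he1def
      set e2 := MeasurableEquiv.toLp 2 (Fin (n + 1) → ℝ) with he2def
      set e3 := (MeasurableEquiv.piFinSuccAbove (fun _ : Fin (n + 1) => ℝ) j).symm with he3def
      set Φ := (e3.trans e2).trans e1 with hΦdef
      have hΦmp : MeasurePreserving Φ volume volume := by
        have h3 : MeasurePreserving e3 volume volume :=
          (volume_preserving_piFinSuccAbove (fun _ : Fin (n + 1) => ℝ) j).symm _
        have h2 : MeasurePreserving e2 volume volume :=
          (EuclideanSpace.volume_preserving_symm_measurableEquiv_toLp (Fin (n + 1))).symm _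
        have h1 : MeasurePreserving e1 volume volume :=
          b.measurePreserving_measurableEquiv.symm _
        exact (h1.comp h2).comp h3
      have hΦapp : ∀ z : ℝ × (Fin n → ℝ), Φ z =
          b.repr.symm ((WithLp.equiv 2 ((_ : Fin (n + 1)) → ℝ)).symm
            (Fin.insertNth (α := fun _ : Fin (n + 1) => ℝ) j z.1 z.2)) := fun z => rfl
      have hkeyΦ : ∀ (t : ℝ) (y : Fin n → ℝ), Φ (t, y) = Φ (0, y) + t • v := by
        intro t y
        rw [hΦapp, hΦapp]
        have hins : Fin.insertNth (α := fun _ : Fin (n + 1) => ℝ) j t y = Fin.insertNth (α := fun _ : Fin (n + 1) => ℝ) j 0 y + t • (Pi.single j 1 : Fin (n + 1) → ℝ) := by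
          funext i
          refine Fin.succAboveCases j ?_ ?_ i
          · simp
          · intro k
            simp [Fin.insertNth_apply_succAbove, Pi.single_eq_of_ne (Fin.succAbove_ne j k)]
        rw [hins]
        have hadd : (WithLp.equiv 2 ((_ : Fin (n + 1)) → ℝ)).symm
            (Fin.insertNth (α := fun _ : Fin (n + 1) => ℝ) j 0 y + t • (Pi.single j 1 : Fin (n + 1) → ℝ))
            = (WithLp.equiv 2 ((_ : Fin (n + 1)) → ℝ)).symm (Fin.insertNth j 0 y)
              + t • EuclideanSpace.single j 1 := rfl
        rw [hadd, map_add, _root_.map_smul, OrthonormalBasis.repr_symm_single, hbj]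
      -- continuity of Φ and its inverse
      have hΦcont : Continuous Φ := by
        have hcoe : ⇑Φ = (fun w : Fin (n + 1) → ℝ =>
            b.repr.symm ((WithLp.equiv 2 ((_ : Fin (n + 1)) → ℝ)).symm w)) ∘
            (fun z : ℝ × (Fin n → ℝ) => Fin.insertNth (α := fun _ : Fin (n + 1) => ℝ) j z.1 z.2) := rfl
        rw [hcoe]
        have hins_cont : Continuous fun z : ℝ × (Fin n → ℝ) =>
            Fin.insertNth (α := fun _ : Fin (n + 1) => ℝ) j z.1 z.2 :=
          Continuous.finInsertNth (A := fun _ : Fin (n + 1) => ℝ) j continuous_fst continuous_snd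
        exact (b.repr.symm.continuous.comp
          (PiLp.continuousLinearEquiv 2 ℝ (fun _ : Fin (n + 1) => ℝ)).symm.continuous).comp
          hins_cont
      have hΨcont : Continuous ⇑Φ.symm := by
        have hcoe : ⇑Φ.symm = fun x : EuclideanSpace ℝ (Fin (n + 1)) =>
            ((b.repr x) j, fun i : Fin n => (b.repr x) (j.succAbove i)) := rfl
        rw [hcoe]
        exact ((PiLp.continuous_apply 2 (fun _ : Fin (n + 1) => ℝ) j).comp b.repr.continuous).prodMk
          (continuous_pi fun i => (PiLp.continuous_apply 2 (fun _ : Fin (n + 1) => ℝ) _).comp b.repr.continuous)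
      set q := Φ.symm p with hqdef
      have hΦq : Φ q = p := Φ.apply_symm_apply p
      have hpre : Φ ⁻¹' Metric.closedBall p δ ∈ 𝓝 q := by
        refine hΦcont.continuousAt.preimage_mem_nhds ?_
        rw [hΦq]
        exact Metric.closedBall_mem_nhds p hδ
      obtain ⟨ρ, hρ, hρball⟩ := Metric.nhds_basis_closedBall.mem_iff.1 hpre
      refine ⟨Φ '' Metric.closedBall q ρ, ?_, ?_⟩
      · have himg : Φ '' Metric.closedBall q ρ = Φ.symm ⁻¹' Metric.closedBall q ρ := by
          rw [MeasurableEquiv.image_eq_preimage_symm]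
        rw [himg]
        exact hΨcont.continuousAt.preimage_mem_nhds
          (by rw [← hqdef]; exact Metric.closedBall_mem_nhds q hρ)
      · rw [hΦmp.integrableOn_image Φ.measurableEmbedding]
        have hGmeas : Measurable fun x : EuclideanSpace ℝ (Fin (n + 1)) =>
            Real.log ((f x) ^ 2) :=
          Real.measurable_log.comp (hf.continuous.pow 2).measurable
        have hprod : Metric.closedBall q ρ =
            Set.Icc (q.1 - ρ) (q.1 + ρ) ×ˢ Metric.closedBall q.2 ρ := by
          rw [← Real.closedBall_eq_Icc, closedBall_prod_same]
        constructor
        · exact (hGmeas.comp Φ.measurable).aestronglyMeasurable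
        · show (∫⁻ z in Metric.closedBall q ρ,
            ‖Real.log ((f (Φ z)) ^ 2)‖₊ ∂(volume : Measure (ℝ × (Fin n → ℝ)))) < ⊤
          rw [hprod, Measure.volume_eq_prod, ← Measure.prod_restrict]
          have hmeas2 : Measurable fun z : ℝ × (Fin n → ℝ) =>
              (‖Real.log ((f (Φ z)) ^ 2)‖₊ : ℝ≥0∞) := (hGmeas.comp Φ.measurable).enorm
          rw [lintegral_prod_symm _ hmeas2.aemeasurable]
          set R : ℝ := ((q.1 + ρ) - (q.1 - ρ)) + 2 * M / (c / 2) with hRdef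
          set C₀ : ℝ≥0∞ := (∫⁻ s in Set.Icc (-R) R, ‖Real.log ((c / 2) ^ 2 * s ^ 2)‖₊)
            + ‖Real.log (M ^ 2)‖₊ * volume (Set.Icc (q.1 - ρ) (q.1 + ρ)) with hC₀def
          have hC₀ : C₀ < ⊤ := by
            rw [hC₀def]
            refine ENNReal.add_lt_top.2 ⟨?_, ?_⟩
            · refine aux_const_lt_top (c / 2) R (by positivity) ?_
              rw [hRdef]
              have : (0:ℝ) < 2 * M / (c / 2) := by positivity
              linarith
            · refine ENNReal.mul_lt_top ENNReal.coe_lt_top ?_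
              rw [Real.volume_Icc]
              exact ENNReal.ofReal_lt_top
          have hslice : ∀ y ∈ Metric.closedBall q.2 ρ,
              (∫⁻ t in Set.Icc (q.1 - ρ) (q.1 + ρ), ‖Real.log ((f (Φ (t, y))) ^ 2)‖₊) ≤ C₀ := by
            intro y hy
            refine slice_bound (fun t => f (Φ (t, y))) (q.1 - ρ) (q.1 + ρ) (c / 2) M
              (by positivity) hM (by linarith) ?_ ?_
            · intro t ht
              have hmem : (t, y) ∈ Metric.closedBall q ρ := by
                rw [hprod]; exact Set.mem_prod.2 ⟨ht, hy⟩
              have hxδ : Φ (t, y) ∈ Metric.closedBall p δ := hρball hmem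
              refine ⟨(fderiv ℝ f (Φ (t, y))) v, ?_, le_of_lt (hδball hxδ)⟩
              have hline : HasDerivAt (fun s : ℝ => Φ (0, y) + s • v) v t := by
                simpa using ((hasDerivAt_id t).smul_const v).const_add (Φ (0, y))
              have hfder := (hf.differentiable (by simp) (Φ (0, y) + t • v)).hasFDerivAt
              have hcomp := hfder.comp_hasDerivAt t hline
              have heq : (fun s : ℝ => f (Φ (0, y) + s • v)) = fun s => f (Φ (s, y)) := by
                funext s; rw [hkeyΦ s y]
              rw [hkeyΦ t y, ← heq]
              exact hcomp
            · intro t ht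
              have hmem : (t, y) ∈ Metric.closedBall q ρ := by
                rw [hprod]; exact Set.mem_prod.2 ⟨ht, hy⟩
              exact hMb _ (hρball hmem)
          calc (∫⁻ y in Metric.closedBall q.2 ρ, ∫⁻ t in Set.Icc (q.1 - ρ) (q.1 + ρ),
                ‖Real.log ((f (Φ (t, y))) ^ 2)‖₊)
              ≤ ∫⁻ _ in Metric.closedBall q.2 ρ, C₀ := by
                refine lintegral_mono_ae ?_
                filter_upwards [ae_restrict_mem measurableSet_closedBall] with y hy
                exact hslice y hy
            _ = C₀ * volume (Metric.closedBall q.2 ρ) := setLIntegral_const _ _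
            _ < ⊤ := ENNReal.mul_lt_top hC₀
                ((isCompact_closedBall q.2 ρ).measure_lt_top)
    · -- easy case: f p ≠ 0
      have hUopen : IsOpen {y : EuclideanSpace ℝ (Fin (n + 1)) | f y ≠ 0} :=
        isOpen_compl_singleton.preimage hf.continuous
      obtain ⟨ε, hε, hball⟩ := Metric.nhds_basis_closedBall.mem_iff.1 (hUopen.mem_nhds hp)
      refine ⟨Metric.closedBall p ε, Metric.closedBall_mem_nhds p hε, ?_⟩
      refine ContinuousOn.integrableOn_compact (isCompact_closedBall p ε) ?_
      intro y hy
      have hcy : ContinuousAt (fun x => Real.log ((f x) ^ 2)) y :=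
        ContinuousAt.comp (g := Real.log) (x := y)
          (Real.continuousAt_log (pow_ne_zero 2 (hball hy)))
          ((hf.continuous.pow 2).continuousAt)
      exact hcy.continuousWithinAt
  exact ⟨hloc, fun K hK => hloc.integrableOn_isCompact hK⟩
end

section
/- Let m ≥ 1 be an integer, let K ⊂ ℝ^m be a compact set, let f : ℝ^m → ℝ be a smooth (C^∞) function that vanishes transversally (for every x with f(x) = 0 the differential of f at x is nonzero), let b : ℝ^m → ℝ be a continuous nonnegative function, and let ψ : ℝ^m → ℝ be continuous. Then ∫_K log( f(x)² + k^{−1} b(x) ) ψ(x) dx → ∫_K log( f(x)² ) ψ(x) dx as the integer k → ∞. -/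
open MeasureTheory Metric Set ENNReal

variable {m : ℕ}

local notation "E" => EuclideanSpace ℝ (Fin m)

set_option maxHeartbeats 2000000 in
lemma loc_bound {f : EuclideanSpace ℝ (Fin m) → ℝ} (hf : ContDiff ℝ (⊤ : ℕ∞) f)
    (x₀ : EuclideanSpace ℝ (Fin m)) (h0 : fderiv ℝ f x₀ ≠ 0) :
    ∃ r > (0:ℝ), ∃ C ≥ (0:ℝ), ∃ t₀ > (0:ℝ), ∀ t, 0 < t → t < t₀ →
      volume (closedBall x₀ r ∩ {x | |f x| ≤ t}) ≤ ENNReal.ofReal (C * t) := by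
  set L := fderiv ℝ f x₀ with hL
  have hc : 0 < ‖L‖ := norm_pos_iff.mpr h0
  set c := ‖L‖ with hcdef
  -- find a direction v with ‖v‖ ≤ 1 and L v > c/2
  obtain ⟨u, hu1, hu2⟩ := L.exists_lt_apply_of_lt_opNorm (half_lt_self hc)
  have hv : ∃ v : EuclideanSpace ℝ (Fin m), ‖v‖ ≤ 1 ∧ c / 2 < L v := by
    rcases le_or_gt 0 (L u) with h | h
    · exact ⟨u, hu1.le, by rwa [Real.norm_eq_abs, abs_of_nonneg h] at hu2⟩
    · refine ⟨-u, by simpa using hu1.le, ?_⟩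
      rw [map_neg]
      rwa [Real.norm_eq_abs, abs_of_neg h] at hu2
  obtain ⟨v, hv1, hv2⟩ := hv
  -- continuity of the directional derivative
  have hcont : Continuous fun y => fderiv ℝ f y v :=
    (hf.continuous_fderiv (by simp)).clm_apply continuous_const
  have hopen : IsOpen {y : EuclideanSpace ℝ (Fin m) | c / 4 < fderiv ℝ f y v} :=
    isOpen_lt continuous_const hcont
  have hx₀mem : x₀ ∈ {y : EuclideanSpace ℝ (Fin m) | c / 4 < fderiv ℝ f y v} := by
    simp only [mem_setOf_eq, ← hL]
    linarith
  obtain ⟨ε, hε, hball⟩ := Metric.isOpen_iff.mp hopen x₀ hx₀mem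
  set r := ε / 3 with hr
  have hrpos : 0 < r := by positivity
  have hsub : closedBall x₀ (2 * r) ⊆ ball x₀ ε := by
    apply closedBall_subset_ball
    rw [hr]; linarith
  -- derivative bound on the double ball
  have hderivlb : ∀ y ∈ closedBall x₀ (2 * r), c / 4 < fderiv ℝ f y v :=
    fun y hy => hball (hsub hy)
  -- monotonicity along v
  have key1 : ∀ x ∈ closedBall x₀ r, ∀ s : ℝ, 0 < s → s ≤ r →
      c / 4 * s ≤ f (x + s • v) - f x := by
    intro x hx s hs hsr
    set g : ℝ → ℝ := fun σ => f (x + σ • v) - c / 4 * σ with hg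
    have hgd : ∀ σ : ℝ, HasDerivAt g (fderiv ℝ f (x + σ • v) v - c / 4) σ := by
      intro σ
      have h1 : HasDerivAt (fun σ : ℝ => x + σ • v) v σ := by
        simpa using ((hasDerivAt_id σ).smul_const v).const_add x
      have h2 : HasDerivAt (fun σ : ℝ => f (x + σ • v)) (fderiv ℝ f (x + σ • v) v) σ :=
        ((hf.differentiable (by simp)) _).hasFDerivAt.comp_hasDerivAt σ h1
      have h3 := h2.sub ((hasDerivAt_id σ).const_mul (c / 4))
      rw [mul_one] at h3
      exact h3
    have hmono : MonotoneOn g (Set.Icc 0 s) := by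
      apply monotoneOn_of_deriv_nonneg (convex_Icc 0 s)
      · exact Continuous.continuousOn (by
          have : Differentiable ℝ g := fun σ => ((hgd σ).differentiableAt)
          exact this.continuous)
      · exact fun σ _ => ((hgd σ).differentiableAt).differentiableWithinAt
      · intro σ hσ
        rw [interior_Icc] at hσ
        rw [(hgd σ).deriv]
        have : x + σ • v ∈ closedBall x₀ (2 * r) := by
          rw [mem_closedBall] at hx ⊢
          calc dist (x + σ • v) x₀ ≤ dist (x + σ • v) x + dist x x₀ := dist_triangle _ _ _
          _ ≤ σ * 1 + r := by
              apply add_le_add _ hx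
              rw [dist_eq_norm]
              simp only [add_sub_cancel_left, norm_smul, Real.norm_eq_abs,
                abs_of_pos hσ.1]
              exact mul_le_mul_of_nonneg_left hv1 hσ.1.le
          _ ≤ 2 * r := by nlinarith [hσ.2, hsr]
        linarith [hderivlb _ this]
    have := hmono (Set.left_mem_Icc.mpr hs.le) (Set.right_mem_Icc.mpr hs.le) hs.le
    simp only [hg, zero_smul, add_zero, mul_zero, sub_zero] at this
    linarith
  -- the volume of the double ball
  set VB := (volume (closedBall x₀ (2 * r))).toReal with hVB
  have hVBfin : volume (closedBall x₀ (2 * r)) ≠ ⊤ :=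
    (isCompact_closedBall _ _).measure_lt_top.ne
  have hVBnn : 0 ≤ VB := ENNReal.toReal_nonneg
  refine ⟨r, hrpos, 18 * VB / (r * c), by positivity, r * c / 18, by positivity, ?_⟩
  intro t ht ht₀
  set d := 9 * t / c with hd
  have hdpos : 0 < d := by positivity
  have hdr : d < r / 2 := by
    rw [hd, div_lt_div_iff₀ hc (by norm_num : (0:ℝ) < 2)]
    have : t * 18 < r * c := (lt_div_iff₀ (by norm_num)).mp ht₀
    linarith
  set N := ⌈r / (2 * d)⌉₊ with hN
  have hN1 : r / (2 * d) ≤ (N : ℝ) := Nat.le_ceil _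
  have hNpos : 0 < N := by
    rw [hN]
    apply Nat.ceil_pos.mpr
    apply div_pos hrpos (by positivity)
  have hN2 : (N : ℝ) * d ≤ r := by
    have : (N : ℝ) < r / (2 * d) + 1 := Nat.ceil_lt_add_one (by positivity)
    have h1 : (N : ℝ) * d < (r / (2 * d) + 1) * d := by
      exact mul_lt_mul_of_pos_right this hdpos
    have : (r / (2 * d) + 1) * d = r / 2 + d := by field_simp
    nlinarith
  set S := closedBall x₀ r ∩ {x | |f x| ≤ t} with hS
  have hSmeas : MeasurableSet S :=
    measurableSet_closedBall.inter
      (measurableSet_le (hf.continuous.abs.measurable) measurable_const)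
  have hSsub : S ⊆ closedBall x₀ r := inter_subset_left
  -- translated copies
  set T : ℕ → Set (EuclideanSpace ℝ (Fin m)) :=
    fun j => (fun y => y + (-((j : ℝ) * d)) • v) ⁻¹' S with hT
  have hTmeas : ∀ j, MeasurableSet (T j) :=
    fun j => hSmeas.preimage (measurable_id.add_const _)
  have hTvol : ∀ j, volume (T j) = volume S := by
    intro j
    exact measure_preimage_add_right volume _ S
  have hTsub : ∀ j ∈ Finset.range N, T j ⊆ closedBall x₀ (2 * r) := by
    intro j hj y hy
    simp only [hT, Set.mem_preimage] at hy
    have hy' : y + (-((j : ℝ) * d)) • v ∈ S := hy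
    have h1 : dist (y + (-((j : ℝ) * d)) • v) x₀ ≤ r := mem_closedBall.mp (hSsub hy')
    have hjd : 0 ≤ (j : ℝ) * d := by positivity
    have hjN : (j : ℝ) * d ≤ r := by
      have hjle : (j : ℝ) ≤ N := by exact_mod_cast (Finset.mem_range.mp hj).le
      nlinarith
    have hyz : y - (y + (-((j : ℝ) * d)) • v) = ((j : ℝ) * d) • v := by module
    have h2 : dist y (y + (-((j : ℝ) * d)) • v) ≤ r := by
      rw [dist_eq_norm, hyz, norm_smul, Real.norm_eq_abs, abs_of_nonneg hjd]
      calc (j : ℝ) * d * ‖v‖ ≤ (j : ℝ) * d * 1 := mul_le_mul_of_nonneg_left hv1 hjd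
        _ ≤ r := by linarith
    rw [mem_closedBall]
    calc dist y x₀ ≤ dist y (y + (-((j : ℝ) * d)) • v) + dist (y + (-((j : ℝ) * d)) • v) x₀ :=
          dist_triangle _ _ _
      _ ≤ 2 * r := by linarith
  have hmain : ∀ i j : ℕ, i < j → j ≤ N → Disjoint (T i) (T j) := by
    intro i j hlt hjN'
    apply Set.disjoint_left.mpr
    intro y hyi hyj
    simp only [hT, Set.mem_preimage] at hyi hyj
    have hyi' : y + (-((i : ℝ) * d)) • v ∈ S := hyi
    have hyj' : y + (-((j : ℝ) * d)) • v ∈ S := hyj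
    set x₂ := y + (-((j : ℝ) * d)) • v with hx₂
    set s := ((j : ℝ) - i) * d with hs
    have hspos : 0 < s := by
      apply mul_pos _ hdpos
      have : (i : ℝ) < j := by exact_mod_cast hlt
      linarith
    have hsler : s ≤ r := by
      have hjN : (j : ℝ) ≤ N := by exact_mod_cast hjN'
      have : s ≤ (N : ℝ) * d := by
        rw [hs]
        apply mul_le_mul_of_nonneg_right _ hdpos.le
        have : (0:ℝ) ≤ i := Nat.cast_nonneg i
        linarith
      linarith
    have heq : x₂ + s • v = y + (-((i : ℝ) * d)) • v := by
      rw [hx₂, hs]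
      module
    have hkey := key1 x₂ (hSsub hyj') s hspos hsler
    rw [heq] at hkey
    have h1 : |f (y + (-((i : ℝ) * d)) • v)| ≤ t := hyi'.2
    have h2 : |f x₂| ≤ t := hyj'.2
    have hsge : d ≤ s := by
      rw [hs]
      nth_rewrite 1 [← one_mul d]
      apply mul_le_mul_of_nonneg_right _ hdpos.le
      have : (i : ℝ) + 1 ≤ j := by exact_mod_cast hlt
      linarith
    have : c / 4 * s ≥ c / 4 * d := mul_le_mul_of_nonneg_left hsge (by positivity)
    rw [hd] at this
    have hc4d : c / 4 * (9 * t / c) = 9 * t / 4 := by field_simp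
    rw [hc4d] at this
    have := abs_le.mp h1
    have := abs_le.mp h2
    linarith [hkey]
  have hdisj : (↑(Finset.range N) : Set ℕ).PairwiseDisjoint T := by
    intro i hi j hj hij
    rcases Nat.lt_or_ge i j with h | h
    · exact hmain i j h (Finset.mem_range.mp hj).le
    · exact (hmain j i (by omega) (Finset.mem_range.mp hi).le).symm
  -- sum up
  have hsum : (N : ℝ≥0∞) * volume S ≤ volume (closedBall x₀ (2 * r)) := by
    have := measure_biUnion_finset (μ := volume) hdisj (fun j _ => hTmeas j)
    have hle : volume (⋃ j ∈ Finset.range N, T j) ≤ volume (closedBall x₀ (2 * r)) :=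
      measure_mono (Set.iUnion₂_subset hTsub)
    rw [this] at hle
    simp only [hTvol, Finset.sum_const, Finset.card_range, nsmul_eq_mul] at hle
    exact hle
  -- convert to reals
  have hSfin : volume S ≠ ⊤ :=
    ((measure_mono hSsub).trans_lt (isCompact_closedBall _ _).measure_lt_top).ne
  set VS := (volume S).toReal with hVS
  have hreal : (N : ℝ) * VS ≤ VB := by
    have h1 : ((N : ℝ≥0∞) * volume S).toReal ≤ VB := by
      apply ENNReal.toReal_mono hVBfin hsum
    rwa [ENNReal.toReal_mul, ENNReal.toReal_natCast] at h1
  have hfinal : VS ≤ 18 * VB / (r * c) * t := by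
    have hNr : r / (2 * d) > 0 := by positivity
    have hNpos' : (0:ℝ) < N := by exact_mod_cast hNpos
    have h1 : VS ≤ VB / N := by
      rw [le_div_iff₀ hNpos']
      linarith [hreal]
    have h2 : VB / N ≤ VB / (r / (2 * d)) := by
      apply div_le_div_of_nonneg_left hVBnn hNr
      · exact hN1
    have h3 : VB / (r / (2 * d)) = VB * (2 * d) / r := by
      field_simp
    have h4 : VB * (2 * d) / r = 18 * VB / (r * c) * t := by
      rw [hd]; field_simp; ring
    linarith
  calc volume S = ENNReal.ofReal VS := (ENNReal.ofReal_toReal hSfin).symm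
    _ ≤ ENNReal.ofReal (18 * VB / (r * c) * t) := ENNReal.ofReal_le_ofReal hfinal

set_option maxHeartbeats 2000000 in
lemma glob_bound {K : Set (EuclideanSpace ℝ (Fin m))} (hK : IsCompact K)
    {f : EuclideanSpace ℝ (Fin m) → ℝ} (hf : ContDiff ℝ (⊤ : ℕ∞) f)
    (htrans : ∀ x, f x = 0 → fderiv ℝ f x ≠ 0) :
    ∃ C > (0:ℝ), ∀ t, 0 < t →
      volume (K ∩ {x | |f x| ≤ t}) ≤ ENNReal.ofReal (C * t) := by
  set Z := K ∩ f ⁻¹' {0} with hZ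
  have hZc : IsCompact Z := hK.inter_right (isClosed_singleton.preimage hf.continuous)
  have H : ∀ z : Z, ∃ r > (0:ℝ), ∃ C ≥ (0:ℝ), ∃ t₀ > (0:ℝ), ∀ t, 0 < t → t < t₀ →
      volume (closedBall (z : EuclideanSpace ℝ (Fin m)) r ∩ {x | |f x| ≤ t})
        ≤ ENNReal.ofReal (C * t) := by
    intro z
    exact loc_bound hf z (htrans z (by simpa using z.2.2))
  choose r hr C hC t₀ ht₀ hb using H
  -- finite subcover of Z
  have hcover : Z ⊆ ⋃ z : Z, ball (z : EuclideanSpace ℝ (Fin m)) (r z) :=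
    fun x hx => mem_iUnion.mpr ⟨⟨x, hx⟩, mem_ball_self (hr _)⟩
  obtain ⟨F, hF⟩ := hZc.elim_finite_subcover _ (fun z => isOpen_ball) hcover
  set U := ⋃ z ∈ F, ball (z : EuclideanSpace ℝ (Fin m)) (r z) with hU
  have hUopen : IsOpen U := isOpen_biUnion (fun z _ => isOpen_ball)
  set K' := K \ U with hK'
  have hK'c : IsCompact K' := hK.diff hUopen
  have hK'f : ∀ x ∈ K', f x ≠ 0 := by
    intro x hx hfx
    have hxZ : x ∈ Z := ⟨hx.1, by simp [hfx]⟩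
    exact hx.2 (hF hxZ)
  -- lower bound for |f| off U
  have hεex : ∃ ε > (0:ℝ), ∀ x ∈ K', ε ≤ |f x| := by
    rcases K'.eq_empty_or_nonempty with h | h
    · exact ⟨1, one_pos, fun x hx => absurd hx (h ▸ notMem_empty x)⟩
    · obtain ⟨x₀, hx₀, hmin⟩ := hK'c.exists_isMinOn h (hf.continuous.abs.continuousOn)
      exact ⟨|f x₀|, abs_pos.mpr (hK'f x₀ hx₀), fun x hx => hmin hx⟩
  obtain ⟨ε, hε, hεlb⟩ := hεex
  -- threshold
  set t₁ : ℝ := min ε (if h : F.Nonempty then F.inf' h t₀ else 1) with ht₁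
  have ht₁pos : 0 < t₁ := by
    apply lt_min hε
    split
    · rename_i h
      exact (Finset.lt_inf'_iff h).mpr (fun z _ => ht₀ z)
    · exact one_pos
  have ht₁le : ∀ z ∈ F, t₁ ≤ t₀ z := by
    intro z hz
    have h : F.Nonempty := ⟨z, hz⟩
    calc t₁ ≤ if h : F.Nonempty then F.inf' h t₀ else 1 := min_le_right _ _
      _ = F.inf' h t₀ := by rw [dif_pos h]
      _ ≤ t₀ z := Finset.inf'_le _ hz
  set C₀ : ℝ := ∑ z ∈ F, C z with hC₀
  have hC₀nn : 0 ≤ C₀ := Finset.sum_nonneg (fun z _ => hC z)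
  have hVK : volume K ≠ ⊤ := hK.measure_lt_top.ne
  set VK := (volume K).toReal with hVK'
  refine ⟨C₀ + VK / t₁ + 1, by positivity, ?_⟩
  intro t ht
  rcases lt_or_ge t t₁ with hcase | hcase
  · -- small t
    have hsubset : K ∩ {x | |f x| ≤ t} ⊆
        ⋃ z ∈ F, (closedBall (z : EuclideanSpace ℝ (Fin m)) (r z) ∩ {x | |f x| ≤ t}) := by
      intro x hx
      have hxU : x ∈ U := by
        by_contra hxU
        have hxK' : x ∈ K' := ⟨hx.1, hxU⟩
        have := hεlb x hxK'
        have : t₁ ≤ ε := min_le_left _ _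
        have := hx.2
        simp only [mem_setOf_eq] at this
        linarith [hεlb x hxK']
      rw [hU] at hxU
      obtain ⟨z, hz, hxz⟩ := mem_iUnion₂.mp hxU
      exact mem_iUnion₂.mpr ⟨z, hz, ball_subset_closedBall hxz, hx.2⟩
    calc volume (K ∩ {x | |f x| ≤ t})
        ≤ volume (⋃ z ∈ F, (closedBall (z : EuclideanSpace ℝ (Fin m)) (r z) ∩ {x | |f x| ≤ t})) :=
          measure_mono hsubset
      _ ≤ ∑ z ∈ F, volume (closedBall (z : EuclideanSpace ℝ (Fin m)) (r z) ∩ {x | |f x| ≤ t}) :=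
          measure_biUnion_finset_le F _
      _ ≤ ∑ z ∈ F, ENNReal.ofReal (C z * t) :=
          Finset.sum_le_sum (fun z hz => hb z t ht (lt_of_lt_of_le hcase (ht₁le z hz)))
      _ = ENNReal.ofReal (∑ z ∈ F, C z * t) := by
          rw [ENNReal.ofReal_sum_of_nonneg (fun z _ => mul_nonneg (hC z) ht.le)]
      _ ≤ ENNReal.ofReal ((C₀ + VK / t₁ + 1) * t) := by
          apply ENNReal.ofReal_le_ofReal
          rw [← Finset.sum_mul]
          apply mul_le_mul_of_nonneg_right _ ht.le
          have : 0 ≤ VK / t₁ := by positivity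
          linarith
  · -- large t
    calc volume (K ∩ {x | |f x| ≤ t}) ≤ volume K := measure_mono inter_subset_left
      _ = ENNReal.ofReal VK := (ENNReal.ofReal_toReal hVK).symm
      _ ≤ ENNReal.ofReal ((C₀ + VK / t₁ + 1) * t) := by
          apply ENNReal.ofReal_le_ofReal
          have h1 : VK = VK / t₁ * t₁ := by field_simp
          have h2 : VK / t₁ * t₁ ≤ VK / t₁ * t := by
            apply mul_le_mul_of_nonneg_left hcase (by positivity)
          nlinarith [ENNReal.toReal_nonneg (a := volume K), ht.le, hC₀nn]

set_option maxHeartbeats 1000000 in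
lemma zero_null {K : Set (EuclideanSpace ℝ (Fin m))} (hK : IsCompact K)
    {f : EuclideanSpace ℝ (Fin m) → ℝ} (hf : ContDiff ℝ (⊤ : ℕ∞) f)
    (htrans : ∀ x, f x = 0 → fderiv ℝ f x ≠ 0) :
    volume (K ∩ {x | f x = 0}) = 0 := by
  obtain ⟨C, hC, hbound⟩ := glob_bound hK hf htrans
  have hA : ∀ n : ℕ, volume (K ∩ {x | f x = 0}) ≤ ENNReal.ofReal (C * (1 / (n + 1))) := by
    intro n
    refine le_trans (measure_mono ?_) (hbound (1 / (n + 1)) (by positivity))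
    rintro x ⟨hx1, hx2⟩
    exact ⟨hx1, by simp only [mem_setOf_eq] at hx2 ⊢; rw [hx2, abs_zero]; positivity⟩
  have htend : Filter.Tendsto (fun n : ℕ => ENNReal.ofReal (C * (1 / (n + 1))))
      Filter.atTop (nhds 0) := by
    have h1 : Filter.Tendsto (fun n : ℕ => C * (1 / ((n : ℝ) + 1))) Filter.atTop (nhds 0) := by
      have := tendsto_one_div_add_atTop_nhds_zero_nat (𝕜 := ℝ)
      simpa using this.const_mul C
    have := ENNReal.tendsto_ofReal h1
    simpa using this
  exact le_antisymm (ge_of_tendsto' htend hA) (by simp)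

set_option maxHeartbeats 2000000 in
lemma log_int {K : Set (EuclideanSpace ℝ (Fin m))} (hK : IsCompact K)
    {f : EuclideanSpace ℝ (Fin m) → ℝ} (hf : ContDiff ℝ (⊤ : ℕ∞) f)
    (htrans : ∀ x, f x = 0 → fderiv ℝ f x ≠ 0) :
    IntegrableOn (fun x => Real.log (f x ^ 2)) K volume := by
  obtain ⟨C, hC, hbound⟩ := glob_bound hK hf htrans
  -- upper bound B for f^2 on K, with B ≥ 1
  have hB : ∃ B : ℝ, 1 ≤ B ∧ ∀ x ∈ K, f x ^ 2 ≤ B := by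
    rcases K.eq_empty_or_nonempty with h | h
    · exact ⟨1, le_refl _, fun x hx => absurd hx (h ▸ notMem_empty x)⟩
    · obtain ⟨x₀, hx₀, hmax⟩ := hK.exists_isMaxOn h ((hf.continuous.pow 2).continuousOn)
      exact ⟨max (f x₀ ^ 2) 1, le_max_right _ _,
        fun x hx => le_trans (hmax hx) (le_max_left _ _)⟩
  obtain ⟨B, hB1, hBle⟩ := hB
  have hlogB : 0 ≤ Real.log B := Real.log_nonneg hB1
  set g : EuclideanSpace ℝ (Fin m) → ℝ := fun x => max 0 (-(Real.log |f x|)) with hg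
  have hgmeas : Measurable g :=
    measurable_const.max (Real.measurable_log.comp hf.continuous.abs.measurable).neg
  have hgnn : ∀ x, 0 ≤ g x := fun x => le_max_left _ _
  -- g is integrable on K via the layer cake formula
  have hgint : IntegrableOn g K volume := by
    constructor
    · exact hgmeas.aestronglyMeasurable
    · rw [hasFiniteIntegral_iff_ofReal (Filter.Eventually.of_forall hgnn)]
      rw [lintegral_eq_lintegral_meas_lt _ (Filter.Eventually.of_forall hgnn)
        hgmeas.aemeasurable]
      have hptwise : ∀ s ∈ Set.Ioi (0:ℝ),
          (volume.restrict K) {a | s < g a} ≤ ENNReal.ofReal (C * Real.exp (-s)) := by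
        intro s hs
        rw [mem_Ioi] at hs
        rw [Measure.restrict_apply (measurableSet_lt measurable_const hgmeas)]
        refine le_trans (measure_mono ?_) (hbound (Real.exp (-s)) (Real.exp_pos _))
        rintro x ⟨hx1, hx2⟩
        refine ⟨hx2, ?_⟩
        simp only [mem_setOf_eq] at hx1 ⊢
        have hx1' : s < max 0 (-(Real.log |f x|)) := hx1
        have hlog : Real.log |f x| < -s := by
          rcases lt_max_iff.mp hx1' with h | h
          · linarith
          · linarith
        have hfx : f x ≠ 0 := by
          intro h
          rw [h] at hlog
          simp at hlog
          linarith
        exact le_of_lt ((Real.log_lt_iff_lt_exp (abs_pos.mpr hfx)).mp hlog)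
      calc ∫⁻ s in Set.Ioi (0:ℝ), (volume.restrict K) {a | s < g a}
          ≤ ∫⁻ s in Set.Ioi (0:ℝ), ENNReal.ofReal (C * Real.exp (-s)) := by
            apply setLIntegral_mono' measurableSet_Ioi hptwise
        _ < ⊤ := by
            have hint : IntegrableOn (fun s => C * Real.exp (-s)) (Set.Ioi (0:ℝ)) volume := by
              have := (exp_neg_integrableOn_Ioi 0 (one_pos)).const_mul C
              simpa [IntegrableOn] using this
            have := hint.lintegral_lt_top  -- hopefully `Integrable.lintegral_lt_top`?
            calc ∫⁻ s in Set.Ioi (0:ℝ), ENNReal.ofReal (C * Real.exp (-s))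
                = ENNReal.ofReal (∫ s in Set.Ioi (0:ℝ), C * Real.exp (-s)) := by
                  rw [ofReal_integral_eq_lintegral_ofReal hint
                    (Filter.Eventually.of_forall (fun s => by positivity))]
              _ < ⊤ := ENNReal.ofReal_lt_top
  -- conclude
  have hconst : IntegrableOn (fun _ : EuclideanSpace ℝ (Fin m) => Real.log B) K volume :=
    integrableOn_const hK.measure_lt_top.ne
  have hdom : IntegrableOn (fun x => Real.log B + 2 * g x) K volume :=
    hconst.add (hgint.const_mul 2)
  apply hdom.mono'
  · exact (Real.measurable_log.comp ((hf.continuous.pow 2).measurable)).aestronglyMeasurable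
  · filter_upwards [ae_restrict_mem hK.measurableSet] with x hx
    rw [Real.norm_eq_abs]
    rcases eq_or_ne (f x) 0 with hfx | hfx
    · simp only [hfx]
      simp only [ne_eq, OfNat.ofNat_ne_zero, not_false_eq_true, zero_pow, Real.log_zero, abs_zero]
      have := hgnn x
      linarith
    · have habs : 0 < |f x| := abs_pos.mpr hfx
      have hlogsq : Real.log (f x ^ 2) = 2 * Real.log |f x| := by
        rw [← sq_abs, Real.log_pow]
        push_cast
        ring
      rw [hlogsq]
      rcases le_or_gt 0 (Real.log |f x|) with h | h
      · rw [abs_of_nonneg (by linarith)]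
        have h1 : f x ^ 2 ≤ B := hBle x hx
        have h2 : Real.log (f x ^ 2) ≤ Real.log B :=
          Real.log_le_log (by positivity) h1
        rw [hlogsq] at h2
        have := hgnn x
        linarith
      · rw [abs_of_neg (by linarith)]
        have : g x = -(Real.log |f x|) := max_eq_right (by linarith)
        rw [this]
        linarith

set_option maxHeartbeats 2000000 in
theorem stmt13 (m : ℕ) (hm : 1 ≤ m) (K : Set (EuclideanSpace ℝ (Fin m)))
    (hK : IsCompact K) (f : EuclideanSpace ℝ (Fin m) → ℝ) (hf : ContDiff ℝ (⊤ : ℕ∞) f)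
    (htrans : ∀ x, f x = 0 → fderiv ℝ f x ≠ 0)
    (b : EuclideanSpace ℝ (Fin m) → ℝ) (hb : Continuous b) (hb0 : ∀ x, 0 ≤ b x)
    (ψ : EuclideanSpace ℝ (Fin m) → ℝ) (hψ : Continuous ψ) :
    Filter.Tendsto
      (fun k : ℕ => ∫ x in K, Real.log ((f x) ^ 2 + (k : ℝ)⁻¹ * b x) * ψ x)
      Filter.atTop (nhds (∫ x in K, Real.log ((f x) ^ 2) * ψ x)) := by
  -- bound B for f^2 + b on K with B ≥ 1, and bound Cψ for |ψ| on K
  have hB : ∃ B : ℝ, 1 ≤ B ∧ ∀ x ∈ K, f x ^ 2 + b x ≤ B := by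
    rcases K.eq_empty_or_nonempty with h | h
    · exact ⟨1, le_refl _, fun x hx => absurd hx (h ▸ notMem_empty x)⟩
    · obtain ⟨x₀, hx₀, hmax⟩ := hK.exists_isMaxOn h
        (((hf.continuous.pow 2).add hb).continuousOn)
      exact ⟨max (f x₀ ^ 2 + b x₀) 1, le_max_right _ _,
        fun x hx => le_trans (hmax hx) (le_max_left _ _)⟩
  obtain ⟨B, hB1, hBle⟩ := hB
  have hlogB : 0 ≤ Real.log B := Real.log_nonneg hB1
  have hCψ : ∃ Cψ : ℝ, 0 ≤ Cψ ∧ ∀ x ∈ K, |ψ x| ≤ Cψ := by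
    rcases K.eq_empty_or_nonempty with h | h
    · exact ⟨0, le_refl _, fun x hx => absurd hx (h ▸ notMem_empty x)⟩
    · obtain ⟨x₀, hx₀, hmax⟩ := hK.exists_isMaxOn h (hψ.abs.continuousOn)
      exact ⟨|ψ x₀|, abs_nonneg _, fun x hx => hmax hx⟩
  obtain ⟨Cψ, hCψ0, hCψle⟩ := hCψ
  -- a.e. facts
  have hnull : ∀ᵐ x ∂(volume.restrict K), f x ≠ 0 := by
    rw [Filter.eventually_iff, mem_ae_iff]
    have hmeas : MeasurableSet {x : EuclideanSpace ℝ (Fin m) | f x = 0} :=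
      measurableSet_eq_fun hf.continuous.measurable measurable_const
    have : {x : EuclideanSpace ℝ (Fin m) | f x ≠ 0}ᶜ = {x | f x = 0} := by
      ext x; simp
    rw [this, Measure.restrict_apply hmeas]
    have := zero_null hK hf htrans
    rwa [Set.inter_comm] at this
  have hmemK : ∀ᵐ x ∂(volume.restrict K), x ∈ K := ae_restrict_mem hK.measurableSet
  have hkinv : ∀ k : ℕ, ((k : ℝ))⁻¹ ≤ 1 := by
    intro k
    rcases Nat.eq_zero_or_pos k with h | h
    · simp [h]
    · rw [inv_le_one_iff₀]
      right
      exact_mod_cast h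
  have hkinv0 : ∀ k : ℕ, 0 ≤ ((k : ℝ))⁻¹ := fun k => by positivity
  -- dominated convergence
  apply tendsto_integral_of_dominated_convergence
    (fun x => (|Real.log (f x ^ 2)| + Real.log B) * Cψ)
  · intro k
    exact ((Real.measurable_log.comp (((hf.continuous.pow 2).add
      (continuous_const.mul hb)).measurable)).mul hψ.measurable).aestronglyMeasurable
  · have h1 : IntegrableOn (fun x => |Real.log (f x ^ 2)|) K volume := (log_int hK hf htrans).abs
    have h2 : IntegrableOn (fun _ : EuclideanSpace ℝ (Fin m) => Real.log B) K volume :=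
      integrableOn_const hK.measure_lt_top.ne
    exact (h1.add h2).mul_const Cψ
  · intro k
    filter_upwards [hnull, hmemK] with x hfx hxK
    have hsq : 0 < f x ^ 2 := by positivity
    have harg1 : f x ^ 2 ≤ f x ^ 2 + (k : ℝ)⁻¹ * b x := by
      nlinarith [mul_nonneg (hkinv0 k) (hb0 x)]
    have harg2 : f x ^ 2 + (k : ℝ)⁻¹ * b x ≤ B := by
      have : (k : ℝ)⁻¹ * b x ≤ 1 * b x :=
        mul_le_mul_of_nonneg_right (hkinv k) (hb0 x)
      have := hBle x hxK
      nlinarith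
    have hup : Real.log (f x ^ 2 + (k : ℝ)⁻¹ * b x) ≤ Real.log B :=
      Real.log_le_log (lt_of_lt_of_le hsq harg1) harg2
    have hlo : Real.log (f x ^ 2) ≤ Real.log (f x ^ 2 + (k : ℝ)⁻¹ * b x) :=
      Real.log_le_log hsq harg1
    have habs : |Real.log (f x ^ 2 + (k : ℝ)⁻¹ * b x)| ≤ |Real.log (f x ^ 2)| + Real.log B := by
      rw [abs_le]
      constructor
      · have := neg_abs_le (Real.log (f x ^ 2))
        linarith
      · have := abs_nonneg (Real.log (f x ^ 2))
        linarith
    rw [Real.norm_eq_abs, abs_mul]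
    exact mul_le_mul habs (hCψle x hxK) (abs_nonneg _)
      (by positivity)
  · filter_upwards [hnull] with x hfx
    have hsq : f x ^ 2 ≠ 0 := pow_ne_zero 2 hfx
    have harg : Filter.Tendsto (fun k : ℕ => f x ^ 2 + (k : ℝ)⁻¹ * b x)
        Filter.atTop (nhds (f x ^ 2)) := by
      have h1 : Filter.Tendsto (fun k : ℕ => (k : ℝ)⁻¹ * b x) Filter.atTop (nhds 0) := by
        simpa using (tendsto_inv_atTop_nhds_zero_nat (𝕜 := ℝ)).mul_const (b x)
      simpa using (tendsto_const_nhds (x := f x ^ 2)).add h1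
    have hcl : ContinuousAt Real.log (f x ^ 2) := Real.continuousAt_log hsq
    exact ((hcl.tendsto.comp harg).mul tendsto_const_nhds)
end
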